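/- Let q be a squarefree bivariate real polynomial of exact total degree k with k ≤ n. Then: (i) every node set contained in the zero set of q with more than d(n,k) nodes is n-dependent (not n-independent); (ii) a node set X contained in the zero set of q with exactly d(n,k) nodes is n-independent if and only if every polynomial p of total degree ≤ n that vanishes at all nodes of X is divisible by q (p = q·r with deg r ≤ n−k). -/

import Mathlib

open MvPolynomial

noncomputable section

/-- A node (point) in the plane. -/
abbrev Pt : Type := Fin 2 → ℝ

/-- `p` is an `n`-fundamental polynomial of the node `A` with respect to the node set `X`. -/
def IsFund (n : ℕ) (X : Finset Pt) (A : Pt) (p : MvPolynomial (Fin 2) ℝ) : Prop :=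
  p.totalDegree ≤ n ∧ eval A p = 1 ∧ ∀ B ∈ X, B ≠ A → eval B p = 0

/-- The node set `X` is `n`-independent. -/
def NIndep (n : ℕ) (X : Finset Pt) : Prop := ∀ A ∈ X, ∃ p, IsFund n X A p

/-- `N_m = dim Π_m = (m+1)(m+2)/2`. -/
def Nn (m : ℕ) : ℕ := (m + 1) * (m + 2) / 2

/-- `d(n,k) = N_n - N_{n-k}`. -/
def dnk (n k : ℕ) : ℕ := Nn n - Nn (n - k)

/-- The space `P_{k,X}` of polynomials of total degree at most `k` vanishing on `X`. -/
def PkX (k : ℕ) (X : Finset Pt) : Submodule ℝ (MvPolynomial (Fin 2) ℝ) :=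
  restrictTotalDegree (Fin 2) ℝ k ⊓
    ⨅ A ∈ X, LinearMap.ker (aeval (R := ℝ) (S₁ := ℝ) (A : Fin 2 → ℝ)).toLinearMap

/-! ### Auxiliary material -/

theorem card_T_aux (m : ℕ) :
    ((Finset.range (m+1)).biUnion (fun s => Finset.HasAntidiagonal.antidiagonal s)).card
      = (m + 1) * (m + 2) / 2 := by
  rw [Finset.card_biUnion (by
    intro x hx y hy hxy
    simp only [Finset.disjoint_left, Finset.HasAntidiagonal.mem_antidiagonal]
    intro p hp hq; exact hxy (hp ▸ hq))]
  simp only [Finset.Nat.card_antidiagonal]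
  have h1 : (∑ i ∈ Finset.range (m+2), i) * 2 = (m+1) * (m+2) := by
    rw [Finset.sum_range_id_mul_two]; simp [Nat.mul_comm]
  have h2 : (∑ i ∈ Finset.range (m+2), i) = ∑ s ∈ Finset.range (m+1), (s+1) := by
    rw [Finset.sum_range_succ' (fun i => i) (m+1)]; simp
  have h3 : (m + 1) * (m + 2) / 2 * 2 = (m+1)*(m+2) := by
    rw [Nat.div_mul_cancel]
    exact (Nat.even_mul_succ_self (m+1)).two_dvd
  omega

/-- The dimension of `Π_m` in two variables is `N_m`. -/
theorem finrank_restrict (m : ℕ) :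
    Module.finrank ℝ (restrictTotalDegree (Fin 2) ℝ m) = Nn m := by
  classical
  have hsum : ∀ d : Fin 2 →₀ ℕ, (d.sum fun _ e => e) = d 0 + d 1 := by
    intro d
    rw [Finsupp.sum_fintype _ _ (fun _ => rfl), Fin.sum_univ_two]
  let T : Finset (ℕ × ℕ) := (Finset.range (m+1)).biUnion (fun s => Finset.HasAntidiagonal.antidiagonal s)
  have hT : ∀ p : ℕ × ℕ, p ∈ T ↔ p.1 + p.2 ≤ m := by
    intro p
    simp only [T, Finset.mem_biUnion, Finset.mem_range, Finset.HasAntidiagonal.mem_antidiagonal]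
    constructor
    · rintro ⟨s, hs, rfl⟩; omega
    · intro h; exact ⟨p.1 + p.2, by omega, rfl⟩
  let e : ↑{d : Fin 2 →₀ ℕ | (d.sum fun _ e => e) ≤ m} ≃ {p : ℕ × ℕ // p ∈ T} :=
    { toFun := fun d => ⟨(d.1 0, d.1 1), by rw [hT]; simpa [hsum] using d.2⟩
      invFun := fun p => ⟨Finsupp.single 0 p.1.1 + Finsupp.single 1 p.1.2, by
        have := (hT p.1).mp p.2
        simp [hsum, Finsupp.single_apply]; omega⟩
      left_inv := fun d => by
        ext i
        fin_cases i <;> simp [Finsupp.single_apply]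
      right_inv := fun p => by
        ext <;> simp [Finsupp.single_apply] }
  haveI : Fintype ↑{d : Fin 2 →₀ ℕ | (d.sum fun _ e => e) ≤ m} := Fintype.ofEquiv _ e.symm
  have := Module.finrank_eq_card_basis
    (basisRestrictSupport ℝ {d : Fin 2 →₀ ℕ | (d.sum fun _ e => e) ≤ m})
  rw [restrictTotalDegree]
  rw [this, Fintype.card_congr e, Fintype.card_coe, card_T_aux]
  rfl

/-- Evaluation at a point as a linear map. -/
def evalL (A : Pt) : MvPolynomial (Fin 2) ℝ →ₗ[ℝ] ℝ where
  toFun p := eval A p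
  map_add' := by simp
  map_smul' := by simp [smul_eval]

/-- The evaluation map `Π_n → ℝ^X`. -/
def Emap (n : ℕ) (X : Finset Pt) :
    ↥(restrictTotalDegree (Fin 2) ℝ n) →ₗ[ℝ] (↥X → ℝ) :=
  LinearMap.pi fun A : ↥X => (evalL (A : Pt)).comp (restrictTotalDegree (Fin 2) ℝ n).subtype

theorem Emap_apply (n : ℕ) (X : Finset Pt) (p : ↥(restrictTotalDegree (Fin 2) ℝ n)) (A : ↥X) :
    Emap n X p A = eval (A : Pt) (p : MvPolynomial (Fin 2) ℝ) := rfl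

/-- Multiplication by `q` as a map `Π_{n-k} → Π_n`. -/
def Mmap (n k : ℕ) (q : MvPolynomial (Fin 2) ℝ) (hqdeg : q.totalDegree ≤ k) (hkn : k ≤ n) :
    ↥(restrictTotalDegree (Fin 2) ℝ (n - k)) →ₗ[ℝ] ↥(restrictTotalDegree (Fin 2) ℝ n) :=
  LinearMap.codRestrict _
    ((LinearMap.mulLeft ℝ q).comp (restrictTotalDegree (Fin 2) ℝ (n - k)).subtype)
    (fun r => by
      rw [mem_restrictTotalDegree]
      calc (q * (r : MvPolynomial (Fin 2) ℝ)).totalDegree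
          ≤ q.totalDegree + (r : MvPolynomial (Fin 2) ℝ).totalDegree := totalDegree_mul _ _
        _ ≤ k + (n - k) := by
            exact Nat.add_le_add hqdeg ((mem_restrictTotalDegree _ _ _).mp r.2)
        _ = n := by omega)

theorem Mmap_apply (n k : ℕ) (q : MvPolynomial (Fin 2) ℝ) (hqdeg : q.totalDegree ≤ k)
    (hkn : k ≤ n) (r : ↥(restrictTotalDegree (Fin 2) ℝ (n - k))) :
    ((Mmap n k q hqdeg hkn r : ↥(restrictTotalDegree (Fin 2) ℝ n)) : MvPolynomial (Fin 2) ℝ)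
      = q * (r : MvPolynomial (Fin 2) ℝ) := rfl

theorem nindep_of_surj (n : ℕ) (X : Finset Pt)
    (h : Function.Surjective (Emap n X)) : NIndep n X := by
  classical
  intro A hA
  obtain ⟨p, hp⟩ := h (Pi.single (⟨A, hA⟩ : ↥X) 1)
  refine ⟨(p : MvPolynomial (Fin 2) ℝ), (mem_restrictTotalDegree _ _ _).mp p.2, ?_, ?_⟩
  · have := congrFun hp (⟨A, hA⟩ : ↥X)
    rw [Emap_apply] at this
    simpa using this
  · intro B hB hBA
    have := congrFun hp (⟨B, hB⟩ : ↥X)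
    rw [Emap_apply] at this
    rw [this, Pi.single_apply, if_neg]
    intro hEq
    exact hBA (congrArg Subtype.val hEq)

theorem surj_of_nindep (n : ℕ) (X : Finset Pt)
    (h : NIndep n X) : Function.Surjective (Emap n X) := by
  classical
  rw [← LinearMap.range_eq_top]
  rw [eq_top_iff]
  intro f _
  rw [pi_eq_sum_univ f]
  refine Submodule.sum_mem _ (fun A _ => Submodule.smul_mem _ _ ?_)
  obtain ⟨p, hpd, hp1, hp0⟩ := h (A : Pt) A.2
  refine ⟨⟨p, (mem_restrictTotalDegree _ _ _).mpr hpd⟩, ?_⟩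
  funext B
  rw [Emap_apply]
  by_cases hBA : A = B
  · subst hBA; simp [hp1]
  · have : (B : Pt) ≠ (A : Pt) := by
      intro hv; exact hBA (Subtype.ext hv.symm)
    simp only [hp0 (B : Pt) B.2 this, if_neg hBA]

/-- **Proposition 4.** Let `q` be a squarefree curve of exact degree `k ≤ n`. Then (i) any node
set in `q` with more than `d(n,k)` nodes is `n`-dependent; (ii) a node set `X ⊆ q` with exactly
`d(n,k)` nodes is `n`-independent iff every `p ∈ Π_n` vanishing on `X` is divisible by `q`. -/
theorem stmt18 (n k : ℕ) (hkn : k ≤ n) (q : MvPolynomial (Fin 2) ℝ)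
    (hq : q ≠ 0) (hqdeg : q.totalDegree = k) (hsq : Squarefree q) :
    (∀ X : Finset Pt, (∀ A ∈ X, eval A q = 0) → dnk n k < X.card → ¬ NIndep n X) ∧
    (∀ X : Finset Pt, (∀ A ∈ X, eval A q = 0) → X.card = dnk n k →
      (NIndep n X ↔ ∀ p : MvPolynomial (Fin 2) ℝ, p.totalDegree ≤ n →
        (∀ A ∈ X, eval A p = 0) →
          ∃ r : MvPolynomial (Fin 2) ℝ, p = q * r ∧ r.totalDegree ≤ n - k)) := by
  classical
  have hqdeg' : q.totalDegree ≤ k := le_of_eq hqdeg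
  set M := Mmap n k q hqdeg' hkn with hM
  -- injectivity of M and rank of its range
  have hMinj : Function.Injective M := by
    intro r r' hrr
    have : q * (r : MvPolynomial (Fin 2) ℝ) = q * (r' : MvPolynomial (Fin 2) ℝ) := by
      rw [← Mmap_apply n k q hqdeg' hkn r, ← Mmap_apply n k q hqdeg' hkn r', hM] at *
      exact congrArg Subtype.val hrr
    exact Subtype.ext (mul_left_cancel₀ hq this)
  have hMrank : Module.finrank ℝ (LinearMap.range M) = Nn (n - k) := by
    rw [LinearMap.finrank_range_of_inj hMinj, finrank_restrict]
  -- general facts for any node set on the curve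
  have key : ∀ X : Finset Pt, (∀ A ∈ X, eval A q = 0) →
      (Module.finrank ℝ (LinearMap.range (Emap n X))
          + Module.finrank ℝ (LinearMap.ker (Emap n X)) = Nn n)
        ∧ LinearMap.range M ≤ LinearMap.ker (Emap n X) := by
    intro X hX
    constructor
    · rw [← finrank_restrict n]
      exact LinearMap.finrank_range_add_finrank_ker (Emap n X)
    · rintro p ⟨r, rfl⟩
      rw [LinearMap.mem_ker]
      funext A
      rw [Emap_apply, Mmap_apply]
      rw [eval_mul, hX (A : Pt) A.2, zero_mul]
      rfl
  have hsurj_card : ∀ X : Finset Pt, Function.Surjective (Emap n X) →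
      Module.finrank ℝ (LinearMap.range (Emap n X)) = X.card := by
    intro X hs
    rw [LinearMap.range_eq_top.mpr hs, finrank_top, Module.finrank_pi, Fintype.card_coe]
  constructor
  · -- part (i)
    intro X hX hcard hind
    obtain ⟨hRN, hle⟩ := key X hX
    have hker : Nn (n - k) ≤ Module.finrank ℝ (LinearMap.ker (Emap n X)) := by
      rw [← hMrank]; exact Submodule.finrank_mono hle
    have hr := hsurj_card X (surj_of_nindep n X hind)
    rw [hr] at hRN
    simp only [dnk] at hcard
    omega
  · -- part (ii)
    intro X hX hcard
    obtain ⟨hRN, hle⟩ := key X hX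
    have hker : Nn (n - k) ≤ Module.finrank ℝ (LinearMap.ker (Emap n X)) := by
      rw [← hMrank]; exact Submodule.finrank_mono hle
    constructor
    · intro hind p hpd hpz
      have hr := hsurj_card X (surj_of_nindep n X hind)
      rw [hr] at hRN
      simp only [dnk] at hcard
      have hkerdim : Module.finrank ℝ (LinearMap.ker (Emap n X)) ≤ Nn (n - k) := by omega
      have heq : LinearMap.range M = LinearMap.ker (Emap n X) :=
        Submodule.eq_of_le_of_finrank_le hle (by omega)
      have hpV : p ∈ restrictTotalDegree (Fin 2) ℝ n := (mem_restrictTotalDegree _ _ _).mpr hpd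
      have hpker : (⟨p, hpV⟩ : ↥(restrictTotalDegree (Fin 2) ℝ n)) ∈ LinearMap.ker (Emap n X) := by
        rw [LinearMap.mem_ker]
        funext A
        rw [Emap_apply]
        exact hpz (A : Pt) A.2
      rw [← heq] at hpker
      obtain ⟨r, hr'⟩ := hpker
      refine ⟨(r : MvPolynomial (Fin 2) ℝ), ?_, (mem_restrictTotalDegree _ _ _).mp r.2⟩
      have := congrArg Subtype.val hr'
      rw [Mmap_apply] at this
      exact this.symm
    · intro H
      apply nindep_of_surj
      have hge : LinearMap.ker (Emap n X) ≤ LinearMap.range M := by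
        rintro ⟨p, hpV⟩ hk
        have hpd := (mem_restrictTotalDegree _ _ _).mp hpV
        have hz : ∀ A ∈ X, eval A p = 0 := by
          intro A hA
          have := congrFun (LinearMap.mem_ker.mp hk) (⟨A, hA⟩ : ↥X)
          rw [Emap_apply] at this
          simpa using this
        obtain ⟨r, hpr, hrd⟩ := H p hpd hz
        refine ⟨⟨r, (mem_restrictTotalDegree _ _ _).mpr hrd⟩, ?_⟩
        apply Subtype.ext
        rw [Mmap_apply]
        exact hpr.symm
      have heq : LinearMap.range M = LinearMap.ker (Emap n X) := le_antisymm hle hge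
      have hkd : Module.finrank ℝ (LinearMap.ker (Emap n X)) = Nn (n - k) := by
        rw [← heq, hMrank]
      rw [← LinearMap.range_eq_top]
      apply Submodule.eq_top_of_finrank_eq
      rw [Module.finrank_pi, Fintype.card_coe, hcard]
      simp only [dnk]
      omega

end
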